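/- The greatest fuzzy auto-simulation of a fuzzy automaton A is a fuzzy pre-order (reflexive and transitive fuzzy relation) and its norm equals 1. -/
import Mathlib


/-- A complete residuated lattice: a complete lattice with a commutative monoid
structure whose unit is the top element, together with a residuum `himp`
satisfying the adjointness property. -/
class CompleteResiduatedLattice (L : Type*) extends CompleteLattice L, CommMonoid L where
  himp : L → L → L
  adjoint : ∀ a b c : L, a * b ≤ c ↔ a ≤ himp b c
  one_eq_top : (1 : L) = ⊤

open CompleteResiduatedLattice

variable {L : Type*} [CompleteResiduatedLattice L]

/-- Sup-⊗ composition of fuzzy relations. -/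
def relComp {X Y Z : Type*} (φ : X → Y → L) (ψ : Y → Z → L) : X → Z → L :=
  fun x z => ⨆ y, φ x y * ψ y z

/-- Composition of a fuzzy relation with a fuzzy set. -/
def relSet {X Y : Type*} (φ : X → Y → L) (g : Y → L) : X → L :=
  fun x => ⨆ y, φ x y * g y

/-- Composition of a fuzzy set with a fuzzy relation. -/
def setRel {X Y : Type*} (f : X → L) (φ : X → Y → L) : Y → L :=
  fun y => ⨆ x, f x * φ x y

/-- The converse of a fuzzy relation. -/
def conv {X Y : Type*} (φ : X → Y → L) : Y → X → L := fun y x => φ x y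

/-- The fuzzy degree of inclusion of fuzzy sets. -/
def fuzS {X : Type*} (f g : X → L) : L := ⨅ x, himp (f x) (g x)

/-- The fuzzy degree of equality of fuzzy sets. -/
def fuzE {X : Type*} (f g : X → L) : L := ⨅ x, himp (f x) (g x) ⊓ himp (g x) (f x)

/-- A fuzzy automaton over the alphabet `Sig` with state set `A`. -/
structure FuzzyAutomaton (L : Type*) (Sig : Type*) (A : Type*) where
  δ : A → Sig → A → L
  σ : A → L
  τ : A → L

variable {Sig : Type*}

/-- A fuzzy simulation between two fuzzy automata. -/
def IsFuzzySimulation {A A' : Type*} (M : FuzzyAutomaton L Sig A)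
    (M' : FuzzyAutomaton L Sig A') (φ : A → A' → L) : Prop :=
  (∀ s, relComp (conv φ) (fun x y => M.δ x s y) ≤
        relComp (fun x' y' => M'.δ x' s y') (conv φ)) ∧
  relSet (conv φ) M.τ ≤ M'.τ

/-- The norm of a fuzzy simulation: `S(σ^A, σ^{A'} ∘ φ⁻¹)`. -/
def simNorm {A A' : Type*} (M : FuzzyAutomaton L Sig A)
    (M' : FuzzyAutomaton L Sig A') (φ : A → A' → L) : L :=
  fuzS M.σ (setRel M'.σ (conv φ))

/-- A fuzzy bisimulation between two fuzzy automata. -/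
def IsFuzzyBisimulation {A A' : Type*} (M : FuzzyAutomaton L Sig A)
    (M' : FuzzyAutomaton L Sig A') (φ : A → A' → L) : Prop :=
  IsFuzzySimulation M M' φ ∧ IsFuzzySimulation M' M (conv φ)

/-- The norm of a fuzzy bisimulation. -/
def bisimNorm {A A' : Type*} (M : FuzzyAutomaton L Sig A)
    (M' : FuzzyAutomaton L Sig A') (φ : A → A' → L) : L :=
  simNorm M M' φ ⊓ simNorm M' M (conv φ)

/-- The fuzzy language recognized from a given state:
`L(A,x)(s₁…sₙ) = (δ_{s₁} ∘ … ∘ δ_{sₙ} ∘ τ)(x)`. -/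
def langFrom {A : Type*} (M : FuzzyAutomaton L Sig A) : A → List Sig → L
  | x, [] => M.τ x
  | x, s :: w => ⨆ y, M.δ x s y * langFrom M y w

/-- The fuzzy language recognized by a fuzzy automaton. -/
def lang {A : Type*} (M : FuzzyAutomaton L Sig A) (w : List Sig) : L :=
  ⨆ x, M.σ x * langFrom M x w

section Aux

lemma crl_mul_le_mul {a b c d : L} (h1 : a ≤ b) (h2 : c ≤ d) : a * c ≤ b * d := by
  have hb : b ≤ himp c (b * c) := (adjoint b c (b * c)).mp le_rfl
  have h3 : a * c ≤ b * c := (adjoint a c (b * c)).mpr (h1.trans hb)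
  have hd : d ≤ himp b (d * b) := (adjoint d b (d * b)).mp le_rfl
  have h4 : c * b ≤ d * b := (adjoint c b (d * b)).mpr (h2.trans hd)
  calc a * c ≤ b * c := h3
    _ = c * b := mul_comm _ _
    _ ≤ d * b := h4
    _ = b * d := mul_comm _ _

lemma crl_iSup_mul {ι : Sort*} (f : ι → L) (a : L) :
    (⨆ i, f i) * a = ⨆ i, f i * a := by
  apply le_antisymm
  · rw [adjoint]
    exact iSup_le fun i => (adjoint _ _ _).mp (le_iSup (fun i => f i * a) i)
  · exact iSup_le fun i => crl_mul_le_mul (le_iSup f i) le_rfl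

lemma crl_mul_iSup {ι : Sort*} (f : ι → L) (a : L) :
    a * (⨆ i, f i) = ⨆ i, a * f i := by
  rw [mul_comm, crl_iSup_mul]; simp only [mul_comm]

lemma crl_top_le_himp {b c : L} (h : b ≤ c) : ⊤ ≤ himp b c := by
  rw [← adjoint]
  calc (⊤ : L) * b = 1 * b := by rw [one_eq_top]
    _ = b := one_mul b
    _ ≤ c := h

open Classical in
/-- The identity fuzzy relation is an auto-simulation. -/
lemma id_isFuzzySimulation {A : Type*} (M : FuzzyAutomaton L Sig A) :
    IsFuzzySimulation M M (fun x y => if x = y then (1 : L) else ⊥) := by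
  have hbot : ∀ a : L, ⊥ * a = ⊥ := fun a =>
    le_antisymm ((adjoint _ _ _).mpr bot_le) bot_le
  constructor
  · intro s x z
    simp only [relComp, conv]
    apply iSup_le
    intro y
    by_cases h : y = x
    · subst h
      rw [if_pos rfl, one_mul]
      refine le_trans ?_ (le_iSup _ z)
      rw [if_pos rfl, mul_one]
    · rw [if_neg h, hbot]
      exact bot_le
  · intro x
    simp only [relSet, conv]
    apply iSup_le
    intro y
    by_cases h : y = x
    · subst h
      rw [if_pos rfl, one_mul]
    · rw [if_neg h, hbot]
      exact bot_le

/-- The pointwise supremum of all auto-simulations is an auto-simulation. -/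
lemma sup_isFuzzySimulation {A : Type*} (M : FuzzyAutomaton L Sig A) :
    IsFuzzySimulation M M
      (fun x y => ⨆ φ ∈ {φ : A → A → L | IsFuzzySimulation M M φ}, φ x y) := by
  constructor
  · intro s x z
    simp only [relComp, conv]
    apply iSup_le
    intro y
    rw [crl_iSup_mul]
    apply iSup_le
    intro φ
    rw [crl_iSup_mul]
    apply iSup_le
    intro hφ
    have h1 : φ y x * M.δ y s z ≤ relComp (conv φ) (fun a b => M.δ a s b) x z :=
      le_iSup (fun y => conv φ x y * M.δ y s z) y
    refine h1.trans ((hφ.1 s x z).trans ?_)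
    apply iSup_le
    intro y'
    refine le_trans ?_ (le_iSup _ y')
    apply crl_mul_le_mul le_rfl
    exact le_iSup₂ (f := fun (ψ : A → A → L) (_ : ψ ∈ {ψ : A → A → L | IsFuzzySimulation M M ψ}) => ψ z y') φ hφ
  · intro x
    simp only [relSet, conv]
    apply iSup_le
    intro y
    rw [crl_iSup_mul]
    apply iSup_le
    intro φ
    rw [crl_iSup_mul]
    apply iSup_le
    intro hφ
    exact le_trans (le_iSup (fun y => conv φ x y * M.τ y) y) (hφ.2 x)

/-- The composition of two auto-simulations is an auto-simulation. -/
lemma comp_isFuzzySimulation {A : Type*} (M : FuzzyAutomaton L Sig A)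
    {φ ψ : A → A → L} (hφ : IsFuzzySimulation M M φ) (hψ : IsFuzzySimulation M M ψ) :
    IsFuzzySimulation M M (relComp φ ψ) := by
  constructor
  · intro s x z
    simp only [relComp, conv]
    apply iSup_le
    intro y
    rw [crl_iSup_mul]
    apply iSup_le
    intro w
    have h1 : φ y w * ψ w x * M.δ y s z = ψ w x * (φ y w * M.δ y s z) := by
      rw [mul_comm (φ y w) (ψ w x), mul_assoc]
    rw [h1]
    have hφstep : φ y w * M.δ y s z ≤ ⨆ y', M.δ w s y' * φ z y' := by
      refine le_trans (le_iSup (fun y => conv φ w y * M.δ y s z) y) (hφ.1 s w z)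
    calc ψ w x * (φ y w * M.δ y s z)
        ≤ ψ w x * ⨆ y', M.δ w s y' * φ z y' := crl_mul_le_mul le_rfl hφstep
      _ = ⨆ y', ψ w x * (M.δ w s y' * φ z y') := crl_mul_iSup _ _
      _ ≤ ⨆ y', M.δ x s y' * ⨆ w', φ z w' * ψ w' y' := by
          apply iSup_le
          intro y₁
          have h2 : ψ w x * (M.δ w s y₁ * φ z y₁)
              = (ψ w x * M.δ w s y₁) * φ z y₁ := by rw [mul_assoc]
          rw [h2]
          have hψstep : ψ w x * M.δ w s y₁ ≤ ⨆ y₂, M.δ x s y₂ * ψ y₁ y₂ := by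
            refine le_trans (le_iSup (fun y => conv ψ x y * M.δ y s y₁) w) (hψ.1 s x y₁)
          calc (ψ w x * M.δ w s y₁) * φ z y₁
              ≤ (⨆ y₂, M.δ x s y₂ * ψ y₁ y₂) * φ z y₁ :=
                crl_mul_le_mul hψstep le_rfl
            _ = ⨆ y₂, M.δ x s y₂ * ψ y₁ y₂ * φ z y₁ := crl_iSup_mul _ _
            _ ≤ ⨆ y₂, M.δ x s y₂ * ⨆ w', φ z w' * ψ w' y₂ := by
                apply iSup_le
                intro y₂
                refine le_trans ?_ (le_iSup _ y₂)
                rw [mul_assoc]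
                apply crl_mul_le_mul le_rfl
                rw [mul_comm]
                exact le_iSup (fun w' => φ z w' * ψ w' y₂) y₁
            _ ≤ _ := by
                apply iSup_le
                intro y₂
                exact le_iSup (fun y' => M.δ x s y' * ⨆ w', φ z w' * ψ w' y') y₂
  · intro x
    simp only [relSet, relComp, conv]
    apply iSup_le
    intro y
    rw [crl_iSup_mul]
    apply iSup_le
    intro w
    have h1 : φ y w * ψ w x * M.τ y = ψ w x * (φ y w * M.τ y) := by
      rw [mul_comm (φ y w) (ψ w x), mul_assoc]
    rw [h1]
    have hφstep : φ y w * M.τ y ≤ M.τ w :=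
      le_trans (le_iSup (fun y => conv φ w y * M.τ y) y) (hφ.2 w)
    calc ψ w x * (φ y w * M.τ y) ≤ ψ w x * M.τ w := crl_mul_le_mul le_rfl hφstep
      _ ≤ M.τ x := le_trans (le_iSup (fun w => conv ψ x w * M.τ w) w) (hψ.2 x)

end Aux

theorem stmt11 {A : Type*} [Nonempty A] (M : FuzzyAutomaton L Sig A) :
    letI g : A → A → L := fun x y => ⨆ φ ∈ {φ : A → A → L | IsFuzzySimulation M M φ}, φ x y
    (∀ x, (1 : L) ≤ g x x) ∧ relComp g g ≤ g ∧ simNorm M M g = 1 := by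
  set g : A → A → L := fun x y => ⨆ φ ∈ {φ : A → A → L | IsFuzzySimulation M M φ}, φ x y
    with hg
  have hle : ∀ (φ : A → A → L), IsFuzzySimulation M M φ → ∀ x y, φ x y ≤ g x y := by
    intro φ hφ x y
    exact le_iSup₂ (f := fun (ψ : A → A → L) (_ : ψ ∈ {ψ : A → A → L | IsFuzzySimulation M M ψ}) => ψ x y) φ hφ
  have hgsim : IsFuzzySimulation M M g := sup_isFuzzySimulation M
  have hrefl : ∀ x, (1 : L) ≤ g x x := by
    intro x
    have := hle _ (id_isFuzzySimulation M) x x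
    simpa using this
  refine ⟨hrefl, ?_, ?_⟩
  · intro x y
    exact hle _ (comp_isFuzzySimulation M hgsim hgsim) x y
  · rw [one_eq_top]
    apply le_antisymm le_top
    apply le_iInf
    intro x
    apply crl_top_le_himp
    calc M.σ x = M.σ x * 1 := (mul_one _).symm
      _ ≤ M.σ x * g x x := crl_mul_le_mul le_rfl (hrefl x)
      _ ≤ ⨆ z, M.σ z * g x z := le_iSup (fun z => M.σ z * g x z) x
      _ = setRel M.σ (conv g) x := by
          simp only [setRel, conv]
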